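/- Let ρ₀ and ρ₁ be the two-qubit density matrices ρ_b = (1/2)(P_b ⊗ (I₂/2)) + (1/2)((I₂/2) ⊗ (H * P_b * H)) for b = 0, 1, and let Δ = ρ₀ − ρ₁. Then Δ is Hermitian, Δ * Δ is positive semidefinite, and the trace of the positive semidefinite square root of Δ * Δ equals 1. Consequently the trace distance (1/2)·Tr|ρ₀ − ρ₁| between the two density operators corresponding to Alice's two possible input values in Protocol 1 equals 1/2. -/

import Mathlib

open Matrix Kronecker ComplexOrder

noncomputable section

/-- The positive semidefinite square root of a positive semidefinite matrix
(the definition `Matrix.PosSemidef.sqrt` of the older Mathlib, since removed). -/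
def Matrix.PosSemidef.sqrt {n : Type*} [Fintype n] [DecidableEq n] {A : Matrix n n ℂ}
    (hA : A.PosSemidef) : Matrix n n ℂ :=
  hA.1.eigenvectorUnitary.1 * diagonal ((↑) ∘ (√·) ∘ hA.1.eigenvalues) *
    (star hA.1.eigenvectorUnitary : Matrix n n ℂ)

def P0 : Matrix (Fin 2) (Fin 2) ℂ := !![1, 0; 0, 0]

def P1 : Matrix (Fin 2) (Fin 2) ℂ := !![0, 0; 0, 1]

/-- The Hadamard gate. -/
def Hg : Matrix (Fin 2) (Fin 2) ℂ := (Real.sqrt 2 : ℂ)⁻¹ • !![1, 1; 1, -1]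

/-- The average state Alice sends in Protocol 1 when her input bit corresponds to the
projector `Pb`: with probability 1/2 she sends `|b⟩⟨b| ⊗ I/2` and with probability 1/2
she sends `I/2 ⊗ H|b⟩⟨b|H`, expressed as a 4×4 matrix via the lexicographic
identification `Fin 2 × Fin 2 ≃ Fin 4`. -/
def rho (Pb : Matrix (Fin 2) (Fin 2) ℂ) : Matrix (Fin 4) (Fin 4) ℂ :=
  Matrix.reindex finProdFinEquiv finProdFinEquiv
    ((1/2 : ℂ) • (Pb ⊗ₖ ((1/2 : ℂ) • (1 : Matrix (Fin 2) (Fin 2) ℂ))) +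
     (1/2 : ℂ) • (((1/2 : ℂ) • (1 : Matrix (Fin 2) (Fin 2) ℂ)) ⊗ₖ (Hg * Pb * Hg)))

def Dm : Matrix (Fin 4) (Fin 4) ℂ :=
  !![1/4, 1/4, 0, 0; 1/4, 1/4, 0, 0; 0, 0, -(1/4), 1/4; 0, 0, 1/4, -(1/4)]

lemma sqrt2_sq : (Real.sqrt 2 : ℂ) * (Real.sqrt 2 : ℂ) = 2 := by
  rw [← Complex.ofReal_mul, Real.mul_self_sqrt (by norm_num)]
  norm_num

set_option maxHeartbeats 1000000 in
lemma rho_sub : rho P0 - rho P1 = Dm := by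
  have h2 := sqrt2_sq
  have hne : (Real.sqrt 2 : ℂ) ≠ 0 := by
    intro h; rw [h, mul_zero] at h2; norm_num at h2
  have h2' : (Real.sqrt 2 : ℂ) ^ 2 = 2 := by rw [sq]; exact h2
  ext i j
  fin_cases i <;> fin_cases j <;>
    · simp [rho, Dm, P0, P1, Hg, Matrix.mul_apply, Fin.sum_univ_succ,
        Matrix.kroneckerMap_apply, Matrix.one_apply, finProdFinEquiv,
        Fin.divNat, Fin.modNat, Fin.ext_iff,
        show ((0:Fin 4):ℕ) = 0 from rfl, show ((1:Fin 4):ℕ) = 1 from rfl,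
        show ((2:Fin 4):ℕ) = 2 from rfl, show ((3:Fin 4):ℕ) = 3 from rfl]
      <;> (try field_simp) <;> (try rw [h2']) <;> (try rw [h2]) <;> (try norm_num) <;> (try simp [Matrix.vecHead, Matrix.vecTail])


lemma Dm_herm : Dm.IsHermitian := by
  unfold Matrix.IsHermitian
  ext i j
  fin_cases i <;> fin_cases j <;>
    simp [Dm, Matrix.conjTranspose_apply, Matrix.vecHead, Matrix.vecTail] <;> norm_num

lemma Dm_sq_psd : (Dm * Dm).PosSemidef := by
  have h := Matrix.posSemidef_conjTranspose_mul_self Dm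
  rwa [Dm_herm.eq] at h

def Sm : Matrix (Fin 4) (Fin 4) ℂ := (2 : ℂ) • (Dm * Dm)

lemma Sm_psd : Sm.PosSemidef := by
  have h := Matrix.posSemidef_conjTranspose_mul_self (((Real.sqrt 2 : ℂ)) • Dm)
  have e : (((Real.sqrt 2 : ℂ)) • Dm)ᴴ * (((Real.sqrt 2 : ℂ)) • Dm) = Sm := by
    rw [Matrix.conjTranspose_smul, Dm_herm.eq, Matrix.smul_mul, Matrix.mul_smul,
      smul_smul, Complex.star_def, Complex.conj_ofReal, sqrt2_sq, Sm]
  rwa [e] at h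

set_option maxHeartbeats 1000000 in
lemma Sm_sq : Sm ^ 2 = Dm * Dm := by
  rw [sq, Sm]
  ext i j
  fin_cases i <;> fin_cases j <;>
    ((simp [Dm, Matrix.mul_apply, Fin.sum_univ_four, Matrix.vecHead, Matrix.vecTail]) <;>
      (try norm_num))

lemma Sm_trace : Sm.trace = 1 := by
  simp [Sm, Dm, Matrix.trace, Matrix.mul_apply, Fin.sum_univ_four, Matrix.diag]
  norm_num

open scoped MatrixOrder in
lemma Dm_sqrt : Dm_sq_psd.sqrt = Sm := by
  have e : Dm_sq_psd.sqrt = CFC.sqrt (Dm * Dm) := by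
    rw [CFC.sqrt_eq_cfc, cfc_nnreal_eq_real _ (Dm * Dm) Dm_sq_psd.nonneg, Dm_sq_psd.1.cfc_eq]
    simp only [IsHermitian.cfc, Matrix.PosSemidef.sqrt, Unitary.conjStarAlgAut_apply]
    congr 3
    funext i
    simp [Real.coe_sqrt, Real.coe_toNNReal', max_eq_left (Dm_sq_psd.eigenvalues_nonneg i)]
  rw [e, CFC.sqrt_eq_iff _ _ Dm_sq_psd.nonneg Sm_psd.nonneg, ← sq, Sm_sq]

/-- The trace distance between the two density operators corresponding to Alice's two
possible input values in Protocol 1 equals 1/2: the difference `Δ = ρ₀ − ρ₁` is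
Hermitian, `Δ·Δ` is positive semidefinite, the trace of its positive semidefinite
square root (i.e. `Tr|Δ|`) equals 1, and hence `(1/2)·Tr|ρ₀ − ρ₁| = 1/2`. -/
theorem trace_distance_protocol1 :
    (rho P0 - rho P1).IsHermitian ∧
    ∃ h : ((rho P0 - rho P1) * (rho P0 - rho P1)).PosSemidef,
      h.sqrt.trace = 1 ∧ (1/2 : ℂ) * h.sqrt.trace = 1/2 := by
  rw [rho_sub]
  refine ⟨Dm_herm, Dm_sq_psd, ?_, ?_⟩ <;>
    rw [Dm_sqrt, Sm_trace] <;> norm_num
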